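/- Let n be an even positive integer and work over a field k of characteristic ≠ 2. Consider the quadratic form f on k^{n+1} given by f(Σ x_m e_m) = Σ_{ℓ+m=n} (-1)^ℓ C(n,ℓ) x_ℓ x_m (i.e., the form of the Gram matrix with antidiagonal entries (-1)^ℓ C(n,ℓ)). Then f is isomorphic to H ⊗ (φ_even ⊕ φ_odd) ⊕ ⟨(-1)^{n/2} C(n,n/2)⟩, where H is the hyperbolic plane ⟨1,-1⟩, φ_even = ⟨C(n,m) : 0 ≤ m < n/2, m even⟩, and φ_odd = ⟨C(n,m) : 0 ≤ m < n/2, m odd⟩. -/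

import Mathlib

set_option maxHeartbeats 4000000

lemma sum_range_split {M : Type*} [AddCommMonoid M] (h : ℕ) (g : ℕ → M) :
    ∑ ℓ ∈ Finset.range (h + h + 1), g ℓ =
      (∑ m ∈ Finset.range h, (g m + g (h + h - m))) + g h := by
  have h1 : ∑ ℓ ∈ Finset.range (h + h + 1), g ℓ
      = ∑ ℓ ∈ Finset.range (h + 1), g ℓ + ∑ ℓ ∈ Finset.Ico (h + 1) (h + h + 1), g ℓ := by
    simp only [Finset.range_eq_Ico]
    exact (Finset.sum_Ico_consecutive _ (by omega) (by omega)).symm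
  have h2 : ∑ ℓ ∈ Finset.Ico (h + 1) (h + h + 1), g ℓ
      = ∑ m ∈ Finset.range h, g (h + h - m) := by
    refine (Finset.sum_nbij' (fun i => h + h - i) (fun m => h + h - m) ?_ ?_ ?_ ?_ ?_).symm
    · intro a ha; simp only [Finset.mem_Ico, Finset.mem_range] at *; omega
    · intro a ha; simp only [Finset.mem_Ico, Finset.mem_range] at *; omega
    · intro a ha; simp only [Finset.mem_Ico, Finset.mem_range] at *; omega
    · intro a ha; simp only [Finset.mem_Ico, Finset.mem_range] at *; omega
    · intro a ha; rfl
  rw [h1, h2, Finset.sum_range_succ, Finset.sum_add_distrib, add_right_comm]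

/-- In characteristic ≠ 2, the quadratic form with antidiagonal Gram entries
`(-1)^ℓ C(n,ℓ)` on `k^{n+1}` is isomorphic to
`H ⊗ (φ_even ⊕ φ_odd) ⊕ ⟨(-1)^{n/2} C(n,n/2)⟩`, where `H = ⟨1,-1⟩` and
`φ_even`, `φ_odd` are the diagonal forms of binomial coefficients `C(n,m)`,
`0 ≤ m < n/2`, with `m` even resp. odd. -/
theorem antidiagonal_form_decomposition (k : Type*) [Field k]
    (hchar : (2 : k) ≠ 0) (n : ℕ) (hn : Even n) (hpos : 0 < n) :
    ∃ e : (Fin (n + 1) → k) ≃ₗ[k] ((Fin (n / 2) → k) × (Fin (n / 2) → k) × k),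
      ∀ x : Fin (n + 1) → k,
        ∑ ℓ : Fin (n + 1), (-1 : k) ^ (ℓ : ℕ) * (n.choose ℓ : k) * x ℓ * x ℓ.rev =
          (∑ m : Fin (n / 2),
            (n.choose (m : ℕ) : k) * (((e x).1 m) ^ 2 - ((e x).2.1 m) ^ 2)) +
          (-1 : k) ^ (n / 2) * (n.choose (n / 2) : k) * ((e x).2.2) ^ 2 := by
  obtain ⟨h, rfl⟩ := hn
  have hd : (h + h) / 2 = h := by omega
  set F : (Fin (h + h + 1) → k) → ((Fin ((h + h) / 2) → k) × (Fin ((h + h) / 2) → k) × k) :=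
    fun x =>
      (fun m => x ⟨(m : ℕ), by have := m.isLt; omega⟩
          + (-1 : k) ^ (m : ℕ) * x ⟨h + h - (m : ℕ), by omega⟩ / 2,
       fun m => x ⟨(m : ℕ), by have := m.isLt; omega⟩
          - (-1 : k) ^ (m : ℕ) * x ⟨h + h - (m : ℕ), by omega⟩ / 2,
       x ⟨h, by omega⟩) with hF
  set G : ((Fin ((h + h) / 2) → k) × (Fin ((h + h) / 2) → k) × k) → (Fin (h + h + 1) → k) :=
    fun p => fun j =>
      if hj : (j : ℕ) < h then (p.1 ⟨(j : ℕ), by omega⟩ + p.2.1 ⟨(j : ℕ), by omega⟩) / 2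
      else if hj2 : (j : ℕ) = h then p.2.2
      else (-1 : k) ^ (h + h - (j : ℕ)) *
        (p.1 ⟨h + h - (j : ℕ), by have := j.isLt; omega⟩
          - p.2.1 ⟨h + h - (j : ℕ), by have := j.isLt; omega⟩) with hG
  have hGF : ∀ x, G (F x) = x := by
    intro x
    funext j
    simp only [hF, hG]
    by_cases hj : (j : ℕ) < h
    · rw [dif_pos hj]
      have : (⟨(j : ℕ), by omega⟩ : Fin (h + h + 1)) = j := by ext; rfl
      rw [this]
      field_simp
      ring
    · rw [dif_neg hj]
      by_cases hj2 : (j : ℕ) = h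
      · rw [dif_pos hj2]
        congr 1
        ext; exact hj2.symm
      · rw [dif_neg hj2]
        have hjn : (j : ℕ) ≤ h + h := by have := j.isLt; omega
        have hsub : h + h - (h + h - (j : ℕ)) = (j : ℕ) := by omega
        have hs : (-1 : k) ^ (h + h - (j : ℕ)) * (-1 : k) ^ (h + h - (j : ℕ)) = 1 := by
          rcases neg_one_pow_eq_or k (h + h - (j : ℕ)) with hp | hp <;> rw [hp] <;> ring
        have heq : (⟨h + h - (h + h - (j : ℕ)), by omega⟩ : Fin (h + h + 1)) = j := by
          ext; simp [hsub]
        rw [heq]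
        field_simp
        linear_combination (2 * x j) * hs
  have hFG : ∀ p, F (G p) = p := by
    intro p
    have key : ∀ (q : Fin ((h + h) / 2) → k) (m : Fin ((h + h) / 2))
        (pf : h + h - (h + h - (m : ℕ)) < (h + h) / 2),
        q ⟨h + h - (h + h - (m : ℕ)), pf⟩ = q m := by
      intro q m pf
      congr 1
      ext
      simp only
      omega
    refine Prod.ext ?_ (Prod.ext ?_ ?_)
    · funext m
      have hm : (m : ℕ) < h := by have := m.isLt; omega
      simp only [hF, hG]
      rw [dif_pos hm, dif_neg (by omega : ¬ h + h - (m : ℕ) < h),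
        dif_neg (by omega : ¬ h + h - (m : ℕ) = h)]
      have hsub : h + h - (h + h - (m : ℕ)) = (m : ℕ) := by omega
      have hs : (-1 : k) ^ (h + h - (h + h - (m : ℕ))) = (-1 : k) ^ (m : ℕ) := by rw [hsub]
      rw [hs, key p.1, key p.2.1]
      have hs2 : (-1 : k) ^ (m : ℕ) * (-1 : k) ^ (m : ℕ) = 1 := by
        rcases neg_one_pow_eq_or k (m : ℕ) with hp | hp <;> rw [hp] <;> ring
      field_simp
      linear_combination (p.1 m - p.2.1 m) * hs2
    · funext m
      have hm : (m : ℕ) < h := by have := m.isLt; omega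
      simp only [hF, hG]
      rw [dif_pos hm, dif_neg (by omega : ¬ h + h - (m : ℕ) < h),
        dif_neg (by omega : ¬ h + h - (m : ℕ) = h)]
      have hsub : h + h - (h + h - (m : ℕ)) = (m : ℕ) := by omega
      have hs : (-1 : k) ^ (h + h - (h + h - (m : ℕ))) = (-1 : k) ^ (m : ℕ) := by rw [hsub]
      rw [hs, key p.1, key p.2.1]
      have hs2 : (-1 : k) ^ (m : ℕ) * (-1 : k) ^ (m : ℕ) = 1 := by
        rcases neg_one_pow_eq_or k (m : ℕ) with hp | hp <;> rw [hp] <;> ring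
      field_simp
      linear_combination (- p.1 m + p.2.1 m) * hs2
    · simp only [hF, hG]
      rw [dif_neg (by omega : ¬ h < h)]
      simp
  have hadd : ∀ x y, F (x + y) = F x + F y := by
    intro x y
    refine Prod.ext ?_ (Prod.ext ?_ ?_)
    · funext m
      simp only [hF, Prod.fst_add, Pi.add_apply]
      ring
    · funext m
      simp only [hF, Prod.snd_add, Prod.fst_add, Pi.add_apply]
      ring
    · simp only [hF, Prod.snd_add, Pi.add_apply]
  have hsmul : ∀ (c : k) x, F (c • x) = c • F x := by
    intro c x
    refine Prod.ext ?_ (Prod.ext ?_ ?_)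
    · funext m
      simp only [hF, Prod.smul_fst, Pi.smul_apply, smul_eq_mul]
      ring
    · funext m
      simp only [hF, Prod.smul_snd, Prod.smul_fst, Pi.smul_apply, smul_eq_mul]
      ring
    · simp only [hF, Prod.smul_snd, Pi.smul_apply, smul_eq_mul]
  refine ⟨{ toFun := F, invFun := G, left_inv := hGF, right_inv := hFG,
            map_add' := hadd, map_smul' := fun c x => hsmul c x }, ?_⟩
  intro x
  set X : ℕ → k := fun j => if hj : j < h + h + 1 then x ⟨j, hj⟩ else 0 with hX
  have hXx : ∀ (j : ℕ) (hj : j < h + h + 1), X j = x ⟨j, hj⟩ := fun j hj => dif_pos hj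
  have hL : ∑ ℓ : Fin (h + h + 1), (-1 : k) ^ (ℓ : ℕ) * ((h + h).choose ℓ : k) * x ℓ * x ℓ.rev
      = ∑ ℓ ∈ Finset.range (h + h + 1),
          (-1 : k) ^ ℓ * ((h + h).choose ℓ : k) * X ℓ * X (h + h - ℓ) := by
    rw [← Fin.sum_univ_eq_sum_range]
    refine Finset.sum_congr rfl fun ℓ _ => ?_
    have h1 : x ℓ = X (ℓ : ℕ) := by rw [hXx (ℓ : ℕ) ℓ.isLt, Fin.eta]
    have h2 : x ℓ.rev = X (h + h - (ℓ : ℕ)) := by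
      rw [hXx (h + h - (ℓ : ℕ)) (by omega)]
      congr 1
      apply Fin.ext
      rw [Fin.val_rev]
      show h + h + 1 - ((ℓ : ℕ) + 1) = h + h - (ℓ : ℕ)
      have := ℓ.isLt
      omega
    rw [h1, h2]
  rw [hL, sum_range_split]
  simp only [LinearEquiv.coe_mk, LinearMap.coe_mk, AddHom.coe_mk]
  have hsum : ∑ m : Fin ((h + h) / 2), ((h + h).choose (m : ℕ) : k) *
        ((x ⟨(m : ℕ), by have := m.isLt; omega⟩
            + (-1 : k) ^ (m : ℕ) * x ⟨h + h - (m : ℕ), by omega⟩ / 2) ^ 2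
          - (x ⟨(m : ℕ), by have := m.isLt; omega⟩
            - (-1 : k) ^ (m : ℕ) * x ⟨h + h - (m : ℕ), by omega⟩ / 2) ^ 2)
      = ∑ j ∈ Finset.range ((h + h) / 2), ((h + h).choose j : k) *
          ((X j + (-1 : k) ^ j * X (h + h - j) / 2) ^ 2
            - (X j - (-1 : k) ^ j * X (h + h - j) / 2) ^ 2) := by
    rw [← Fin.sum_univ_eq_sum_range]
    refine Finset.sum_congr rfl fun m _ => ?_
    rw [hXx (m : ℕ) (by have := m.isLt; omega), hXx (h + h - (m : ℕ)) (by omega)]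
  rw [hsum]
  simp only [hd]
  rw [show (F x).2.2 = X h from (hXx h (by omega)).symm]
  refine congrArg₂ (· + ·) (Finset.sum_congr rfl fun m hm => ?_) ?_
  · rw [Finset.mem_range] at hm
    have hsgn : (-1 : k) ^ (h + h - m) = (-1 : k) ^ m := by
      rw [show h + h - m = m + 2 * (h - m) by omega, pow_add, pow_mul, neg_one_sq, one_pow,
        mul_one]
    rw [hsgn, show h + h - (h + h - m) = m by omega,
      show (h + h).choose (h + h - m) = (h + h).choose m from Nat.choose_symm (by omega)]
    rcases neg_one_pow_eq_or k m with hp | hp <;> rw [hp] <;> field_simp <;> ring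
  · rw [show h + h - h = h by omega]
    ring
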